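/- Let C be a nonempty compact convex subset of a real uniformly convex Banach space X, let T : C → C be a uniformly L-Lipschitzian, nearly nonexpansive mapping with respect to {a_n} with Σ_{n=0}^∞ a_n < ∞, let {α_n} satisfy 0 < a ≤ α_n ≤ b < 1 for all n, and let {x_n} be the modified Picard–Mann hybrid iteration y_n = (1 − α_n)x_n + α_n T^n x_n, x_{n+1} = T^n y_n. Then {x_n} converges strongly (in norm) to a fixed point of T. -/

import Mathlib

open Filter Set Function Topology

section aux
variable {X : Type*} [NormedAddCommGroup X] [NormedSpace ℝ X]

/-- Approximate fixed points for nearly nonexpansive maps on compact convex sets. -/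
lemma approx_fix {C : Set X} (hcp : IsCompact C) (hcv : Convex ℝ C)
    {x₀ : X} (hx₀ : x₀ ∈ C) {S : X → X} (hS : Set.MapsTo S C C)
    (hScont : ContinuousOn S C) {c : ℝ}
    (hnear : ∀ x ∈ C, ∀ y ∈ C, ‖S x - S y‖ ≤ ‖x - y‖ + c)
    {D : ℝ} (hD : ∀ u ∈ C, ∀ v ∈ C, ‖u - v‖ ≤ D)
    {t : ℝ} (ht0 : 0 < t) (ht1 : t < 1) :
    ∃ w ∈ C, ‖w - S w‖ ≤ t * c / (1 - t) + (1 - t) * D := by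
  set U : X → X := fun z => (1 - t) • x₀ + t • S z with hU
  have hUC : Set.MapsTo U C C := fun z hz => hcv hx₀ (hS hz) (by linarith) ht0.le (by ring)
  have hUcont : ContinuousOn U C := continuousOn_const.add (hScont.const_smul t)
  have hgcont : ContinuousOn (fun z => ‖z - U z‖) C := (continuousOn_id.sub hUcont).norm
  obtain ⟨w, hwC, hw⟩ := hcp.exists_isMinOn ⟨x₀, hx₀⟩ hgcont
  have key : ‖U w - U (U w)‖ ≤ t * (‖w - U w‖ + c) := by
    have h1 : U w - U (U w) = t • (S w - S (U w)) := by simp only [hU]; module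
    rw [h1, norm_smul, Real.norm_eq_abs, abs_of_pos ht0]
    exact mul_le_mul_of_nonneg_left (hnear w hwC (U w) (hUC hwC)) ht0.le
  have hmin : ‖w - U w‖ ≤ ‖U w - U (U w)‖ := hw (hUC hwC)
  have hgw : ‖w - U w‖ ≤ t * c / (1 - t) := by
    rw [le_div_iff₀ (by linarith : (0:ℝ) < 1 - t)]
    nlinarith [hmin, key]
  refine ⟨w, hwC, ?_⟩
  have h2 : ‖U w - S w‖ ≤ (1 - t) * D := by
    have : U w - S w = (1 - t) • (x₀ - S w) := by simp only [hU]; module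
    rw [this, norm_smul, Real.norm_eq_abs, abs_of_pos (by linarith : (0:ℝ) < 1 - t)]
    exact mul_le_mul_of_nonneg_left (hD x₀ hx₀ (S w) (hS hwC)) (by linarith)
  calc ‖w - S w‖ ≤ ‖w - U w‖ + ‖U w - S w‖ := by
        simpa using norm_add_le (w - U w) (U w - S w)
    _ ≤ t * c / (1 - t) + (1 - t) * D := add_le_add hgw h2

/-- Browder-type fixed point theorem. -/
lemma nonexp_fix {C : Set X} (hne : C.Nonempty) (hcp : IsCompact C) (hcv : Convex ℝ C)
    {S : X → X} (hS : Set.MapsTo S C C)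
    (hnon : ∀ x ∈ C, ∀ y ∈ C, ‖S x - S y‖ ≤ ‖x - y‖) :
    ∃ p ∈ C, S p = p := by
  obtain ⟨D, hD'⟩ := Metric.isBounded_iff.1 hcp.isBounded
  have hD : ∀ u ∈ C, ∀ v ∈ C, ‖u - v‖ ≤ D := fun u hu v hv => by
    rw [← dist_eq_norm]; exact hD' hu hv
  obtain ⟨x₀, hx₀⟩ := hne
  have hD0 : 0 ≤ D := by simpa using hD x₀ hx₀ x₀ hx₀
  have hScont : ContinuousOn S C := by
    refine (LipschitzOnWith.of_dist_le_mul (K := 1) fun u hu v hv => ?_).continuousOn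
    simpa [dist_eq_norm] using hnon u hu v hv
  have hnear : ∀ x ∈ C, ∀ y ∈ C, ‖S x - S y‖ ≤ ‖x - y‖ + 0 := by
    simpa using hnon
  have hgcont : ContinuousOn (fun z => ‖z - S z‖) C := (continuousOn_id.sub hScont).norm
  obtain ⟨p, hpC, hp⟩ := hcp.exists_isMinOn ⟨x₀, hx₀⟩ hgcont
  refine ⟨p, hpC, ?_⟩
  have hle : ∀ ε > 0, ‖p - S p‖ ≤ ε := by
    intro ε hε
    rcases le_or_gt D ε with hcase | hcase
    · obtain ⟨w, hwC, hwb⟩ := approx_fix hcp hcv hx₀ hS hScont hnear hD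
        (by norm_num : (0:ℝ) < 1/2) (by norm_num : (1:ℝ)/2 < 1)
      calc ‖p - S p‖ ≤ ‖w - S w‖ := hp hwC
        _ ≤ 1/2 * 0 / (1 - 1/2) + (1 - 1/2) * D := hwb
        _ ≤ ε := by nlinarith
    · have htt : 0 < 1 - ε / (2 * D) := by
        have : ε / (2*D) < 1 := by
          rw [div_lt_one (by nlinarith)]; nlinarith
        linarith
      have htt2 : 1 - ε / (2 * D) < 1 := by
        have : 0 < ε / (2*D) := div_pos hε (by nlinarith)
        linarith
      obtain ⟨w, hwC, hwb⟩ := approx_fix hcp hcv hx₀ hS hScont hnear hD htt htt2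
      calc ‖p - S p‖ ≤ ‖w - S w‖ := hp hwC
        _ ≤ (1 - ε/(2*D)) * 0 / (1 - (1 - ε/(2*D))) + (1 - (1 - ε/(2*D))) * D := hwb
        _ = ε / (2*D) * D := by ring_nf
        _ ≤ ε := by
            rw [div_mul_eq_mul_div, mul_comm, ← div_mul_eq_mul_div]
            nlinarith [div_le_one_of_le₀ (by nlinarith : D ≤ 2*D) (by nlinarith : (0:ℝ) ≤ 2*D)]
  have hle0 : ‖p - S p‖ ≤ 0 := by
    by_contra h
    push_neg at h
    linarith [hle (‖p - S p‖ / 2) (by linarith)]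
  have h0 : p - S p = 0 := norm_le_zero_iff.1 hle0
  exact (sub_eq_zero.1 h0).symm

end aux

section schu

variable {X : Type*} [NormedAddCommGroup X] [NormedSpace ℝ X]

/-- Combination estimate from uniform convexity. -/
lemma combo_bound [UniformConvexSpace X] {ε a' b' : ℝ} (hε : 0 < ε) (ha' : 0 < a')
    (ha'1 : a' < 1) (hb'0 : 0 < b') (hb' : b' < 1) :
    ∃ δ', 0 < δ' ∧ δ' < 1 ∧ ∀ (u v : X) (t : ℝ), ‖u‖ ≤ 1 → ‖v‖ ≤ 1 → ε ≤ ‖u - v‖ →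
      a' ≤ t → t ≤ b' → ‖(1 - t) • u + t • v‖ ≤ 1 - δ' := by
  obtain ⟨δ, hδ0, hδ⟩ := exists_forall_closed_ball_dist_add_le_two_sub X hε
  set δ2 : ℝ := min δ 1 with hδ2def
  have hδ20 : 0 < δ2 := lt_min hδ0 one_pos
  have hδ21 : δ2 ≤ 1 := min_le_right _ _
  set c' : ℝ := min a' (1 - b') with hc'def
  have hc'0 : 0 < c' := lt_min ha' (by linarith)
  refine ⟨c' * δ2 / 2, by positivity, ?_, ?_⟩
  · have h1 : c' ≤ 1 := le_trans (min_le_left _ _) ha'1.le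
    nlinarith
  intro u v t hu hv huv hta htb
  have hmid : ‖u + v‖ ≤ 2 - δ2 := by
    have := hδ hu hv huv
    have : ‖u + v‖ ≤ 2 - δ := this
    linarith [min_le_left δ 1, this]
  have ht0 : 0 < t := lt_of_lt_of_le ha' hta
  have ht1 : t < 1 := lt_of_le_of_lt htb hb'
  have key : ‖(1 - t) • u + t • v‖ ≤ 1 - min t (1 - t) * δ2 := by
    rcases le_or_gt t (1/2) with hc | hc
    · have heq : (1 - t) • u + t • v = (1 - 2*t) • u + (2*t) • ((1/2 : ℝ) • (u + v)) := by
        module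
      have hb : ‖(1 - 2*t) • u + (2*t) • ((1/2 : ℝ) • (u + v))‖
          ≤ (1 - 2*t) * ‖u‖ + (2*t) * ((1/2) * ‖u + v‖) := by
        refine (norm_add_le _ _).trans (add_le_add ?_ ?_)
        · rw [norm_smul, Real.norm_eq_abs, abs_of_nonneg (by linarith)]
        · rw [norm_smul, norm_smul, Real.norm_eq_abs, Real.norm_eq_abs,
            abs_of_nonneg (by linarith : (0:ℝ) ≤ 2*t), abs_of_nonneg (by norm_num : (0:ℝ) ≤ 1/2)]
      rw [heq]
      have hmt : min t (1 - t) = t := min_eq_left (by linarith)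
      rw [hmt]
      nlinarith [hb, hu, hmid]
    · have heq : (1 - t) • u + t • v = (2*t - 1) • v + (2 - 2*t) • ((1/2 : ℝ) • (u + v)) := by
        module
      have hb : ‖(2*t - 1) • v + (2 - 2*t) • ((1/2 : ℝ) • (u + v))‖
          ≤ (2*t - 1) * ‖v‖ + (2 - 2*t) * ((1/2) * ‖u + v‖) := by
        refine (norm_add_le _ _).trans (add_le_add ?_ ?_)
        · rw [norm_smul, Real.norm_eq_abs, abs_of_nonneg (by linarith)]
        · rw [norm_smul, norm_smul, Real.norm_eq_abs, Real.norm_eq_abs,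
            abs_of_nonneg (by linarith : (0:ℝ) ≤ 2 - 2*t), abs_of_nonneg (by norm_num : (0:ℝ) ≤ 1/2)]
      rw [heq]
      have hmt : min t (1 - t) = 1 - t := min_eq_right (by linarith)
      rw [hmt]
      nlinarith [hb, hv, hmid]
  have hcm : c' ≤ min t (1 - t) := le_min (le_trans (min_le_left _ _) hta)
    (le_trans (min_le_right _ _) (by linarith))
  have : c' * δ2 / 2 ≤ min t (1 - t) * δ2 := by nlinarith
  linarith

/-- Schu's lemma. -/
lemma schu_lemma [UniformConvexSpace X] {u v : ℕ → X} {α : ℕ → ℝ} {a' b' c : ℝ}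
    (ha' : 0 < a') (hb' : b' < 1) (hα : ∀ n, a' ≤ α n ∧ α n ≤ b') (hc : 0 < c)
    {cu cv : ℕ → ℝ} (hu : ∀ n, ‖u n‖ ≤ cu n) (hv : ∀ n, ‖v n‖ ≤ cv n)
    (hcu : Tendsto cu atTop (nhds c)) (hcv : Tendsto cv atTop (nhds c))
    (hw : Tendsto (fun n => ‖(1 - α n) • u n + α n • v n‖) atTop (nhds c)) :
    Tendsto (fun n => u n - v n) atTop (nhds 0) := by
  have ha'1 : a' < 1 := lt_of_le_of_lt (le_trans (hα 0).1 (hα 0).2) hb'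
  have hb'0 : 0 < b' := lt_of_lt_of_le ha' (le_trans (hα 0).1 (hα 0).2)
  rw [NormedAddCommGroup.tendsto_nhds_zero]
  intro ε hε
  set ε' : ℝ := ε / (c + 1) with hε'def
  have hε'0 : 0 < ε' := div_pos hε (by linarith)
  obtain ⟨δ', hδ'0, hδ'1, hkey⟩ := combo_bound (X := X) hε'0 ha' ha'1 hb'0 hb'
  set η : ℝ := min (c * δ' / 4) 1 with hηdef
  have hη0 : 0 < η := lt_min (by positivity) one_pos
  have hη1 : η ≤ 1 := min_le_right _ _
  have hη2 : η ≤ c * δ' / 4 := min_le_left _ _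
  have E1 : ∀ᶠ n in atTop, cu n < c + η := hcu.eventually_lt_const (by linarith)
  have E2 : ∀ᶠ n in atTop, cv n < c + η := hcv.eventually_lt_const (by linarith)
  have E3 : ∀ᶠ n in atTop, c - η < ‖(1 - α n) • u n + α n • v n‖ :=
    hw.eventually_const_lt (by linarith)
  filter_upwards [E1, E2, E3] with n h1 h2 h3
  by_contra hcon
  push_neg at hcon
  set d : ℝ := max (cu n) (cv n) with hddef
  have hdu : ‖u n‖ ≤ d := le_trans (hu n) (le_max_left _ _)
  have hdv : ‖v n‖ ≤ d := le_trans (hv n) (le_max_right _ _)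
  have hd0 : 0 < d := by
    by_contra hd
    push_neg at hd
    have hu0 : u n = 0 := norm_le_zero_iff.1 (le_trans hdu hd)
    have hv0 : v n = 0 := norm_le_zero_iff.1 (le_trans hdv hd)
    rw [hu0, hv0, sub_zero, norm_zero] at hcon
    linarith
  have hdc : d < c + η := max_lt h1 h2
  have hdc1 : d ≤ c + 1 := by linarith
  set u' : X := d⁻¹ • u n with hu'def
  set v' : X := d⁻¹ • v n with hv'def
  have hu'1 : ‖u'‖ ≤ 1 := by
    rw [hu'def, norm_smul, Real.norm_eq_abs, abs_of_pos (inv_pos.2 hd0)]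
    rw [inv_mul_le_iff₀ hd0]
    simpa using hdu
  have hv'1 : ‖v'‖ ≤ 1 := by
    rw [hv'def, norm_smul, Real.norm_eq_abs, abs_of_pos (inv_pos.2 hd0)]
    rw [inv_mul_le_iff₀ hd0]
    simpa using hdv
  have huv' : ε' ≤ ‖u' - v'‖ := by
    have : u' - v' = d⁻¹ • (u n - v n) := by rw [hu'def, hv'def, smul_sub]
    rw [this, norm_smul, Real.norm_eq_abs, abs_of_pos (inv_pos.2 hd0)]
    rw [hε'def]
    rw [div_le_iff₀ (by linarith : (0:ℝ) < c + 1)]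
    rw [inv_mul_eq_div, div_mul_eq_mul_div, le_div_iff₀ hd0]
    nlinarith [hcon, hε.le, hdc1]
  have hcombo := hkey u' v' (α n) hu'1 hv'1 huv' (hα n).1 (hα n).2
  have heq : (1 - α n) • u' + α n • v' = d⁻¹ • ((1 - α n) • u n + α n • v n) := by
    rw [hu'def, hv'def]; module
  rw [heq, norm_smul, Real.norm_eq_abs, abs_of_pos (inv_pos.2 hd0)] at hcombo
  have hwn : ‖(1 - α n) • u n + α n • v n‖ ≤ d * (1 - δ') := by
    rw [inv_mul_le_iff₀ hd0] at hcombo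
    linarith [hcombo]
  have hfin : d * (1 - δ') ≤ (c + η) * (1 - δ') := by nlinarith
  nlinarith [h3, hwn, hfin, hη2, hδ'0, hδ'1, hc]

end schu

section part3

variable {X : Type*} [NormedAddCommGroup X] [NormedSpace ℝ X]

lemma lipschitzish_continuousOn {C : Set X} {f : X → X} {K : ℝ} (hK : 0 < K)
    (h : ∀ x ∈ C, ∀ y ∈ C, ‖f x - f y‖ ≤ K * ‖x - y‖) : ContinuousOn f C := by
  refine (LipschitzOnWith.of_dist_le_mul (K := K.toNNReal) fun u hu v hv => ?_).continuousOn
  rw [Real.coe_toNNReal K hK.le]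
  simpa [dist_eq_norm] using h u hu v hv

theorem exists_fixed_of_nearly [UniformConvexSpace X]
    (C : Set X) (hC : C.Nonempty) (hCcp : IsCompact C) (hCcv : Convex ℝ C)
    (T : X → X) (hT : Set.MapsTo T C C)
    (L : ℝ) (hL : 0 < L)
    (hTL : ∀ x ∈ C, ∀ y ∈ C, ∀ n, 1 ≤ n → ‖T^[n] x - T^[n] y‖ ≤ L * ‖x - y‖)
    (a : ℕ → ℝ) (ha : ∀ n, a n ∈ Set.Ico (0 : ℝ) 1)
    (halim : Filter.Tendsto a Filter.atTop (nhds 0))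
    (hTa : ∀ x ∈ C, ∀ y ∈ C, ∀ n, 1 ≤ n → ‖T^[n] x - T^[n] y‖ ≤ ‖x - y‖ + a n) :
    ∃ p ∈ C, T p = p := by
  obtain ⟨x₀, hx₀⟩ := hC
  have hTn : ∀ n, Set.MapsTo (T^[n]) C C := fun n => hT.iterate n
  obtain ⟨D, hD'⟩ := Metric.isBounded_iff.1 hCcp.isBounded
  have hD : ∀ u ∈ C, ∀ v ∈ C, ‖u - v‖ ≤ D := fun u hu v hv => by
    rw [← dist_eq_norm]; exact hD' hu hv
  have hD0 : 0 ≤ D := by simpa using hD x₀ hx₀ x₀ hx₀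
  have hTcont : ContinuousOn T C := by
    refine lipschitzish_continuousOn hL fun u hu v hv => ?_
    simpa using hTL u hu v hv 1 le_rfl
  have hTncont : ∀ n, 1 ≤ n → ContinuousOn (T^[n]) C := fun n hn =>
    lipschitzish_continuousOn hL fun u hu v hv => hTL u hu v hv n hn
  -- the scale sequence
  set s : ℕ → ℝ := fun n => max (Real.sqrt (a n)) (1 / (n + 2)) with hsdef
  have hs0 : ∀ n, 0 < s n := fun n =>
    lt_max_of_lt_right (by positivity)
  have hs1 : ∀ n, s n < 1 := fun n => by
    apply max_lt
    · rw [show (1:ℝ) = Real.sqrt 1 by simp]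
      exact Real.sqrt_lt_sqrt (ha n).1 (ha n).2
    · rw [div_lt_one (by positivity)]
      linarith [Nat.cast_nonneg (α := ℝ) n]
  set ε : ℕ → ℝ := fun n => Real.sqrt (a n) + s n * D with hεdef
  have hεlim : Tendsto ε atTop (nhds 0) := by
    have h1 : Tendsto (fun n => Real.sqrt (a n)) atTop (nhds 0) := by
      rw [show (0:ℝ) = Real.sqrt 0 by simp]
      exact (Real.continuous_sqrt.tendsto 0).comp halim
    have h2 : Tendsto (fun n : ℕ => 1 / ((n : ℝ) + 2)) atTop (nhds 0) := by
      simp only [one_div]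
      exact (tendsto_atTop_add_const_right atTop (2:ℝ)
        tendsto_natCast_atTop_atTop).inv_tendsto_atTop
    have hslim : Tendsto s atTop (nhds 0) := by
      have := h1.max h2
      rw [max_self] at this
      simpa [hsdef, one_div] using this
    have : Tendsto (fun n => Real.sqrt (a n) + s n * D) atTop (nhds (0 + 0 * D)) :=
      h1.add (hslim.mul_const D)
    simpa using this
  -- approximate fixed points of the iterates
  have hzex : ∀ n : ℕ, ∃ z ∈ C, ‖z - T^[n+1] z‖ ≤ ε (n+1) := by
    intro n
    have hnear : ∀ u ∈ C, ∀ v ∈ C, ‖T^[n+1] u - T^[n+1] v‖ ≤ ‖u - v‖ + a (n+1) :=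
      fun u hu v hv => hTa u hu v hv (n+1) (Nat.le_add_left 1 n)
    have ht0 : (0:ℝ) < 1 - s (n+1) := by linarith [hs1 (n+1)]
    have ht1 : 1 - s (n+1) < 1 := by linarith [hs0 (n+1)]
    obtain ⟨w, hwC, hwb⟩ := approx_fix hCcp hCcv hx₀ (hTn (n+1))
      (hTncont (n+1) (Nat.le_add_left 1 n)) hnear hD (by linarith) ht1
    refine ⟨w, hwC, hwb.trans ?_⟩
    have hb1 : (1 - s (n+1)) * a (n+1) / (1 - (1 - s (n+1))) ≤ Real.sqrt (a (n+1)) := by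
      rw [show 1 - (1 - s (n+1)) = s (n+1) by ring]
      rw [div_le_iff₀ (hs0 (n+1))]
      have hsq : a (n+1) = Real.sqrt (a (n+1)) * Real.sqrt (a (n+1)) :=
        (Real.mul_self_sqrt (ha (n+1)).1).symm
      have hsle : Real.sqrt (a (n+1)) ≤ s (n+1) := le_max_left _ _
      nlinarith [Real.sqrt_nonneg (a (n+1)), (ha (n+1)).1, hs0 (n+1), hs1 (n+1)]
    have hb2 : (1 - (1 - s (n+1))) * D = s (n+1) * D := by ring
    rw [hb2]
    exact add_le_add hb1 le_rfl
  choose z hzC hz using hzex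
  -- convergent subsequence
  obtain ⟨q, hqC, φ, hφ, hzq⟩ := hCcp.isSeqCompact fun n => hzC n
  set m : ℕ → ℕ := fun k => φ k + 1 with hmdef
  have hm : Tendsto m atTop atTop :=
    (tendsto_add_atTop_nat 1).comp hφ.tendsto_atTop
  -- T^[m k] q → q
  have hznorm : Tendsto (fun k => ‖z (φ k) - q‖) atTop (nhds 0) := by
    have := hzq
    rw [tendsto_iff_norm_sub_tendsto_zero] at this
    simpa using this
  have hεφ : Tendsto (fun k => ε (m k)) atTop (nhds 0) := hεlim.comp hm
  have hTmq : Tendsto (fun k => T^[m k] q) atTop (nhds q) := by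
    rw [tendsto_iff_norm_sub_tendsto_zero]
    have hbnd : ∀ k, ‖T^[m k] q - q‖ ≤ L * ‖q - z (φ k)‖ + (ε (m k) + ‖z (φ k) - q‖) := by
      intro k
      have h1 : ‖T^[m k] q - T^[m k] (z (φ k))‖ ≤ L * ‖q - z (φ k)‖ :=
        hTL q hqC (z (φ k)) (hzC (φ k)) (m k) (Nat.le_add_left 1 (φ k))
      have h2 : ‖T^[m k] (z (φ k)) - z (φ k)‖ ≤ ε (m k) := by
        rw [norm_sub_rev]; exact hz (φ k)
      calc ‖T^[m k] q - q‖
          ≤ ‖T^[m k] q - T^[m k] (z (φ k))‖ + ‖T^[m k] (z (φ k)) - z (φ k)‖ + ‖z (φ k) - q‖ :=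
            norm_sub_le_norm_sub_add_norm_sub _ _ _ |>.trans
              (add_le_add (norm_sub_le_norm_sub_add_norm_sub _ _ _) le_rfl)
      _ ≤ L * ‖q - z (φ k)‖ + (ε (m k) + ‖z (φ k) - q‖) := by linarith [h1, h2]
    have hrhs : Tendsto (fun k => L * ‖q - z (φ k)‖ + (ε (m k) + ‖z (φ k) - q‖)) atTop (nhds 0) := by
      have h1 : Tendsto (fun k => ‖q - z (φ k)‖) atTop (nhds 0) := by
        simpa [norm_sub_rev] using hznorm
      have := ((h1.const_mul L).add (hεφ.add hznorm))
      simpa using this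
    exact squeeze_zero (fun k => norm_nonneg _) hbnd hrhs
  -- ultrafilter limit operator
  set U : Ultrafilter ℕ := Ultrafilter.of atTop with hUdef
  have hUle : (U : Filter ℕ) ≤ atTop := Ultrafilter.of_le atTop
  have hSex : ∀ x' ∈ C, ∃ p ∈ C, Tendsto (fun k => T^[m k] x') (U : Filter ℕ) (nhds p) := by
    intro x' hx'
    have hmem : C ∈ Ultrafilter.map (fun k => T^[m k] x') U := by
      have hpre : (fun k => T^[m k] x') ⁻¹' C = Set.univ :=
        eq_univ_of_forall fun k => hTn (m k) hx'
      change (fun k => T^[m k] x') ⁻¹' C ∈ U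
      rw [hpre]
      exact univ_mem
    obtain ⟨p, hpC, hple⟩ := hCcp.ultrafilter_le_nhds
      (Ultrafilter.map (fun k => T^[m k] x') U) (le_principal_iff.2 hmem)
    exact ⟨p, hpC, hple⟩
  have hSex' : ∀ x' : X, ∃ p, x' ∈ C →
      p ∈ C ∧ Tendsto (fun k => T^[m k] x') (U : Filter ℕ) (nhds p) := by
    intro x'
    by_cases hx' : x' ∈ C
    · obtain ⟨p, h1, h2⟩ := hSex x' hx'
      exact ⟨p, fun _ => ⟨h1, h2⟩⟩
    · exact ⟨x', fun h => absurd h hx'⟩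
  choose S hS using hSex'
  have hSC : ∀ x' ∈ C, S x' ∈ C := fun x' h => (hS x' h).1
  have hStend : ∀ x' ∈ C, Tendsto (fun k => T^[m k] x') (U : Filter ℕ) (nhds (S x')) :=
    fun x' h => (hS x' h).2
  have hamU : Tendsto (fun k => a (m k)) (U : Filter ℕ) (nhds 0) :=
    (halim.comp hm).mono_left hUle
  have hamU' : Tendsto (fun k => a (m k + 1)) (U : Filter ℕ) (nhds 0) :=
    (halim.comp ((tendsto_add_atTop_nat 1).comp hm)).mono_left hUle
  have hSq : S q = q := tendsto_nhds_unique (hStend q hqC) (hTmq.mono_left hUle)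
  have hSnon : ∀ x' ∈ C, ∀ y' ∈ C, ‖S x' - S y'‖ ≤ ‖x' - y'‖ := by
    intro x' hx' y' hy'
    have h1 : Tendsto (fun k => ‖T^[m k] x' - T^[m k] y'‖ - a (m k)) (U : Filter ℕ)
        (nhds (‖S x' - S y'‖ - 0)) :=
      (((hStend x' hx').sub (hStend y' hy')).norm).sub hamU
    have h2 : ∀ k, ‖T^[m k] x' - T^[m k] y'‖ - a (m k) ≤ ‖x' - y'‖ := fun k => by
      linarith [hTa x' hx' y' hy' (m k) (Nat.le_add_left 1 (φ k))]
    have := le_of_tendsto h1 (Eventually.of_forall h2)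
    linarith
  have hST : ∀ x' ∈ C, S (T x') = T (S x') := by
    intro x' hx'
    have h1 : Tendsto (fun k => T^[m k] (T x')) (U : Filter ℕ) (nhds (S (T x'))) :=
      hStend (T x') (hT hx')
    have h2 : Tendsto (fun k => T (T^[m k] x')) (U : Filter ℕ) (nhds (T (S x'))) := by
      have hcw : ContinuousWithinAt T C (S x') := hTcont (S x') (hSC x' hx')
      exact hcw.tendsto.comp (tendsto_nhdsWithin_of_tendsto_nhds_of_eventually_within _
        (hStend x' hx') (Eventually.of_forall fun k => hTn (m k) hx'))
    have h3 : (fun k => T^[m k] (T x')) = fun k => T (T^[m k] x') := by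
      funext k
      rw [← Function.iterate_succ_apply, Function.iterate_succ_apply']
    rw [h3] at h1
    exact tendsto_nhds_unique h1 h2
  -- the fixed point set of S
  set F : Set X := C ∩ (fun w => S w - w) ⁻¹' {0} with hFdef
  have hSont : ContinuousOn S C := by
    refine (LipschitzOnWith.of_dist_le_mul (K := 1) fun u hu v hv => ?_).continuousOn
    simpa [dist_eq_norm] using hSnon u hu v hv
  have hFclosed : IsClosed F :=
    (hSont.sub continuousOn_id).preimage_isClosed_of_isClosed hCcp.isClosed isClosed_singleton
  have hqF : q ∈ F := ⟨hqC, by simp [hSq]⟩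
  have hFcp : IsCompact F := hCcp.of_isClosed_subset hFclosed inter_subset_left
  have hFfix : ∀ w ∈ F, S w = w := fun w hw => by
    have := hw.2
    simp only [mem_preimage, mem_singleton_iff, sub_eq_zero] at this
    exact this
  have hFconv : Convex ℝ F := by
    intro w₁ hw₁ w₂ hw₂ lam mu hlam hmu hlm
    have hmC : lam • w₁ + mu • w₂ ∈ C := hCcv hw₁.1 hw₂.1 hlam hmu hlm
    have hS1 : S w₁ = w₁ := hFfix w₁ hw₁
    have hS2 : S w₂ = w₂ := hFfix w₂ hw₂
    refine ⟨hmC, ?_⟩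
    simp only [mem_preimage, mem_singleton_iff, sub_eq_zero]
    have hlam' : lam = 1 - mu := by linarith
    subst hlam'
    set w : X := (1 - mu) • w₁ + mu • w₂ with hwdef
    by_cases hd : w₁ = w₂
    · have hww : w = w₁ := by rw [hwdef, hd, ← add_smul]; simp
      rw [hww, hS1]
    · set d : ℝ := ‖w₁ - w₂‖ with hddef
      have hd0 : 0 < d := norm_pos_iff.2 (sub_ne_zero.2 hd)
      have h1 : ‖S w - w₁‖ ≤ mu * d := by
        calc ‖S w - w₁‖ = ‖S w - S w₁‖ := by rw [hS1]
          _ ≤ ‖w - w₁‖ := hSnon w hmC w₁ hw₁.1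
          _ = mu * d := by
              have : w - w₁ = mu • (w₂ - w₁) := by rw [hwdef]; module
              rw [this, norm_smul, Real.norm_eq_abs, abs_of_nonneg hmu, norm_sub_rev]
      have h2 : ‖S w - w₂‖ ≤ (1 - mu) * d := by
        calc ‖S w - w₂‖ = ‖S w - S w₂‖ := by rw [hS2]
          _ ≤ ‖w - w₂‖ := hSnon w hmC w₂ hw₂.1
          _ = (1 - mu) * d := by
              have : w - w₂ = (1 - mu) • (w₁ - w₂) := by rw [hwdef]; module
              rw [this, norm_smul, Real.norm_eq_abs, abs_of_nonneg hlam]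
      have h3 : d ≤ ‖w₁ - S w‖ + ‖S w - w₂‖ := norm_sub_le_norm_sub_add_norm_sub w₁ (S w) w₂
      have h1' : ‖w₁ - S w‖ ≤ mu * d := by rw [norm_sub_rev]; exact h1
      have heq1 : ‖w₁ - S w‖ = mu * d := by linarith
      have heq2 : ‖S w - w₂‖ = (1 - mu) * d := by linarith
      have hray : SameRay ℝ (w₁ - S w) (S w - w₂) := by
        rw [sameRay_iff_norm_add]
        rw [show (w₁ - S w) + (S w - w₂) = w₁ - w₂ by abel, heq1, heq2, ← hddef]
        ring
      obtain ⟨r, t, hr, ht, hrt, hu1, _⟩ := hray.exists_eq_smul_add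
      have hu1' : w₁ - S w = r • (w₁ - w₂) := by
        rw [hu1]
        congr 1
        abel
      have hnorm : mu * d = r * d := by
        rw [← heq1, hu1', norm_smul, Real.norm_eq_abs, abs_of_nonneg hr]
      have hrmu : r = mu := by
        have := mul_right_cancel₀ hd0.ne' hnorm.symm
        exact this
      have : S w = w := by
        have hSw : S w = w₁ - r • (w₁ - w₂) := by
          rw [← hu1']
          abel
        rw [hSw, hrmu, hwdef]
        module
      exact this
  -- T maps F to F nonexpansively
  have hTF : Set.MapsTo T F F := by
    intro w hw
    refine ⟨hT hw.1, ?_⟩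
    simp only [mem_preimage, mem_singleton_iff, sub_eq_zero]
    rw [hST w hw.1, hFfix w hw]
  have hTnonF : ∀ u ∈ F, ∀ v ∈ F, ‖T u - T v‖ ≤ ‖u - v‖ := by
    intro u hu v hv
    have h1 : Tendsto (fun k => T^[m k] (T u)) (U : Filter ℕ) (nhds (T u)) := by
      have := hStend (T u) (hT hu.1)
      rwa [hST u hu.1, hFfix u hu] at this
    have h2 : Tendsto (fun k => T^[m k] (T v)) (U : Filter ℕ) (nhds (T v)) := by
      have := hStend (T v) (hT hv.1)
      rwa [hST v hv.1, hFfix v hv] at this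
    have h3 : Tendsto (fun k => ‖T^[m k] (T u) - T^[m k] (T v)‖ - a (m k + 1)) (U : Filter ℕ)
        (nhds (‖T u - T v‖ - 0)) := ((h1.sub h2).norm).sub hamU'
    have h4 : ∀ k, ‖T^[m k] (T u) - T^[m k] (T v)‖ - a (m k + 1) ≤ ‖u - v‖ := fun k => by
      rw [← Function.iterate_succ_apply, ← Function.iterate_succ_apply]
      linarith [hTa u hu.1 v hv.1 (m k + 1) (Nat.le_add_left 1 (m k))]
    linarith [le_of_tendsto h3 (Eventually.of_forall h4)]
  obtain ⟨p, hpF, hp⟩ := nonexp_fix ⟨q, hqF⟩ hFcp hFconv hTF hTnonF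
  exact ⟨p, hpF.1, hp⟩

end part3

section part4

variable {X : Type*} [NormedAddCommGroup X] [NormedSpace ℝ X]

lemma step_est (C : Set X) (T : X → X)
    (a : ℕ → ℝ) (ha0 : ∀ n, 0 ≤ a n)
    (hTa : ∀ x ∈ C, ∀ y ∈ C, ∀ n, 1 ≤ n → ‖T^[n] x - T^[n] y‖ ≤ ‖x - y‖ + a n)
    (α : ℕ → ℝ) (hα0 : ∀ n, 0 ≤ α n) (hα1 : ∀ n, α n ≤ 1)
    (x y : ℕ → X) (hxC : ∀ n, x n ∈ C) (hyC : ∀ n, y n ∈ C)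
    (hy : ∀ n, y n = (1 - α n) • x n + α n • T^[n] (x n))
    (hx : ∀ n, x (n + 1) = T^[n] (y n))
    (p : X) (hpC : p ∈ C) (hp : T p = p) :
    ∀ n, 1 ≤ n → ‖y n - p‖ ≤ ‖x n - p‖ + a n ∧ ‖x (n+1) - p‖ ≤ ‖y n - p‖ + a n := by
  intro n hn
  have hpfix : T^[n] p = p := Function.iterate_fixed hp n
  have h1 : ‖y n - p‖ ≤ ‖x n - p‖ + a n := by
    have hdecomp : y n - p = (1 - α n) • (x n - p) + α n • (T^[n] (x n) - p) := by
      rw [hy n]; module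
    have hTb : ‖T^[n] (x n) - p‖ ≤ ‖x n - p‖ + a n := by
      conv_lhs => rw [← hpfix]
      exact hTa (x n) (hxC n) p hpC n hn
    calc ‖y n - p‖ = ‖(1 - α n) • (x n - p) + α n • (T^[n] (x n) - p)‖ := by rw [hdecomp]
      _ ≤ ‖(1 - α n) • (x n - p)‖ + ‖α n • (T^[n] (x n) - p)‖ := norm_add_le _ _
      _ = (1 - α n) * ‖x n - p‖ + α n * ‖T^[n] (x n) - p‖ := by
          rw [norm_smul, norm_smul, Real.norm_eq_abs, Real.norm_eq_abs,
            abs_of_nonneg (by linarith [hα1 n]), abs_of_nonneg (hα0 n)]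
      _ ≤ ‖x n - p‖ + a n := by nlinarith [hTb, hα0 n, hα1 n, ha0 n, norm_nonneg (x n - p)]
  have h2 : ‖x (n+1) - p‖ ≤ ‖y n - p‖ + a n := by
    rw [hx n]
    conv_lhs => rw [← hpfix]
    exact hTa (y n) (hyC n) p hpC n hn
  exact ⟨h1, h2⟩

lemma limdist (C : Set X) (T : X → X)
    (a : ℕ → ℝ) (ha0 : ∀ n, 0 ≤ a n) (hasum : Summable a)
    (hTa : ∀ x ∈ C, ∀ y ∈ C, ∀ n, 1 ≤ n → ‖T^[n] x - T^[n] y‖ ≤ ‖x - y‖ + a n)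
    (α : ℕ → ℝ) (hα0 : ∀ n, 0 ≤ α n) (hα1 : ∀ n, α n ≤ 1)
    (x y : ℕ → X) (hxC : ∀ n, x n ∈ C) (hyC : ∀ n, y n ∈ C)
    (hy : ∀ n, y n = (1 - α n) • x n + α n • T^[n] (x n))
    (hx : ∀ n, x (n + 1) = T^[n] (y n))
    (p : X) (hpC : p ∈ C) (hp : T p = p) :
    ∃ ℓ, 0 ≤ ℓ ∧ Tendsto (fun n => ‖x n - p‖) atTop (nhds ℓ) := by
  have hstep : ∀ n, 1 ≤ n → ‖x (n+1) - p‖ ≤ ‖x n - p‖ + 2 * a n := by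
    intro n hn
    obtain ⟨h1, h2⟩ := step_est C T a ha0 hTa α hα0 hα1 x y hxC hyC hy hx p hpC hp n hn
    linarith
  set t : ℕ → ℝ := fun n => ∑' k, a (k + n) with htdef
  have htnn : ∀ n, 0 ≤ t n := fun n => tsum_nonneg fun k => ha0 _
  have htrec : ∀ n, t n = a n + t (n+1) := by
    intro n
    have hsm : Summable fun k => a (k + n) := (summable_nat_add_iff n).2 hasum
    have h0 := hsm.tsum_eq_zero_add
    simp only [zero_add] at h0
    rw [htdef]
    simp only []
    rw [h0]
    congr 1
    exact tsum_congr fun k => by rw [show k + 1 + n = k + (n+1) by omega]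
  have htlim : Tendsto t atTop (nhds 0) := tendsto_sum_nat_add a
  set d : ℕ → ℝ := fun k => ‖x (k+1) - p‖ + 2 * t (k+1) with hddef
  have hant : Antitone d := by
    apply antitone_nat_of_succ_le
    intro k
    have h1 := hstep (k+1) (Nat.le_add_left 1 k)
    have h2 := htrec (k+1)
    simp only [hddef]
    have : t (k+1) = a (k+1) + t (k+2) := h2
    calc ‖x (k+1+1) - p‖ + 2 * t (k+1+1)
        ≤ (‖x (k+1) - p‖ + 2 * a (k+1)) + 2 * t (k+2) := by
          refine add_le_add h1 ?_
          norm_num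
      _ = ‖x (k+1) - p‖ + 2 * t (k+1) := by rw [this]; ring
  have hbdd : BddBelow (Set.range d) := by
    refine ⟨0, ?_⟩
    rintro r ⟨k, rfl⟩
    have := htnn (k+1)
    positivity
  have hdlim : Tendsto d atTop (nhds (⨅ k, d k)) := tendsto_atTop_ciInf hant hbdd
  set ℓ : ℝ := ⨅ k, d k with hℓdef
  have hℓ0 : 0 ≤ ℓ := by
    refine le_ciInf fun k => ?_
    have := htnn (k+1)
    positivity
  refine ⟨ℓ, hℓ0, ?_⟩
  rw [← tendsto_add_atTop_iff_nat 1]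
  have hshift : Tendsto (fun k => d k - 2 * t (k+1)) atTop (nhds (ℓ - 2 * 0)) :=
    hdlim.sub ((htlim.comp (tendsto_add_atTop_nat 1)).const_mul 2)
  have heq : (fun k => d k - 2 * t (k+1)) = fun k => ‖x (k+1) - p‖ := by
    funext k
    simp only [hddef]
    ring
  rw [heq] at hshift
  simpa using hshift

end part4

/-- Theorem 3.1 (iii): `{x n}` converges strongly to a fixed point of `T`. -/
theorem stmt_11
    {X : Type*} [NormedAddCommGroup X] [NormedSpace ℝ X]
    [CompleteSpace X] [UniformConvexSpace X]
    (C : Set X) (hC : C.Nonempty) (hCcp : IsCompact C) (hCcv : Convex ℝ C)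
    (T : X → X) (hT : Set.MapsTo T C C)
    (L : ℝ) (hL : 0 < L)
    (hTL : ∀ x ∈ C, ∀ y ∈ C, ∀ n, 1 ≤ n → ‖T^[n] x - T^[n] y‖ ≤ L * ‖x - y‖)
    (a : ℕ → ℝ) (ha : ∀ n, a n ∈ Set.Ico (0 : ℝ) 1)
    (halim : Filter.Tendsto a Filter.atTop (nhds 0))
    (hasum : Summable a)
    (hTa : ∀ x ∈ C, ∀ y ∈ C, ∀ n, 1 ≤ n → ‖T^[n] x - T^[n] y‖ ≤ ‖x - y‖ + a n)
    (α : ℕ → ℝ) (a' b' : ℝ) (ha' : 0 < a') (hb' : b' < 1)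
    (hα : ∀ n, a' ≤ α n ∧ α n ≤ b')
    (x y : ℕ → X)
    (hx0 : x 0 ∈ C)
    (hxC : ∀ n, x n ∈ C) (hyC : ∀ n, y n ∈ C)
    (hy : ∀ n, y n = (1 - α n) • x n + α n • T^[n] (x n))
    (hx : ∀ n, x (n + 1) = T^[n] (y n)) :
    ∃ p ∈ C, T p = p ∧ Filter.Tendsto x Filter.atTop (nhds p) := by
  have ha0 : ∀ n, 0 ≤ a n := fun n => (ha n).1
  have hα0 : ∀ n, 0 ≤ α n := fun n => le_trans ha'.le (hα n).1
  have hα1 : ∀ n, α n ≤ 1 := fun n => le_trans (hα n).2 hb'.le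
  obtain ⟨p₀, hp₀C, hp₀⟩ := exists_fixed_of_nearly C hC hCcp hCcv T hT L hL hTL a ha halim hTa
  obtain ⟨ℓ, hℓ0, hlim⟩ := limdist C T a ha0 hasum hTa α hα0 hα1 x y hxC hyC hy hx p₀ hp₀C hp₀
  have hstep := step_est C T a ha0 hTa α hα0 hα1 x y hxC hyC hy hx p₀ hp₀C hp₀
  have hTcont : ContinuousOn T C :=
    lipschitzish_continuousOn hL fun u hu v hv => by simpa using hTL u hu v hv 1 le_rfl
  rcases eq_or_lt_of_le hℓ0 with hℓz | hℓpos
  · -- ℓ = 0 : direct convergence to p₀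
    refine ⟨p₀, hp₀C, hp₀, ?_⟩
    rw [tendsto_iff_norm_sub_tendsto_zero]
    rw [← hℓz] at hlim
    exact hlim
  · -- ℓ > 0 : use Schu's lemma
    have hylim : Tendsto (fun n => ‖y n - p₀‖) atTop (nhds ℓ) := by
      have hlow : Tendsto (fun n => ‖x (n+1) - p₀‖ - a n) atTop (nhds (ℓ - 0)) :=
        (hlim.comp (tendsto_add_atTop_nat 1)).sub halim
      have hup : Tendsto (fun n => ‖x n - p₀‖ + a n) atTop (nhds (ℓ + 0)) := hlim.add halim
      rw [sub_zero] at hlow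
      rw [add_zero] at hup
      refine tendsto_of_tendsto_of_tendsto_of_le_of_le' hlow hup ?_ ?_
      · filter_upwards [eventually_ge_atTop 1] with n hn
        linarith [(hstep n hn).2]
      · filter_upwards [eventually_ge_atTop 1] with n hn
        exact (hstep n hn).1
    have hv : ∀ n, ‖T^[n] (x n) - p₀‖ ≤ ‖x n - p₀‖ + a n := by
      intro n
      cases n with
      | zero =>
        simp only [Function.iterate_zero_apply]
        linarith [ha0 0]
      | succ k =>
        have h := hTa (x (k+1)) (hxC (k+1)) p₀ hp₀C (k+1) (Nat.le_add_left 1 k)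
        rw [Function.iterate_fixed hp₀] at h
        exact h
    have hcv : Tendsto (fun n => ‖x n - p₀‖ + a n) atTop (nhds ℓ) := by
      have := hlim.add halim
      rwa [add_zero] at this
    have hw : Tendsto (fun n => ‖(1 - α n) • (x n - p₀) + α n • (T^[n] (x n) - p₀)‖) atTop
        (nhds ℓ) := by
      have heq : (fun n => ‖(1 - α n) • (x n - p₀) + α n • (T^[n] (x n) - p₀)‖)
          = fun n => ‖y n - p₀‖ := by
        funext n
        congr 1
        rw [hy n]
        module
      rw [heq]
      exact hylim
    have hσvec := schu_lemma (u := fun n => x n - p₀) (v := fun n => T^[n] (x n) - p₀)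
      ha' hb' hα hℓpos (cu := fun n => ‖x n - p₀‖) (cv := fun n => ‖x n - p₀‖ + a n)
      (fun n => le_rfl) hv hlim hcv hw
    have hσ : Tendsto (fun n => ‖x n - T^[n] (x n)‖) atTop (nhds 0) := by
      have := hσvec.norm
      simp only [sub_sub_sub_cancel_right, norm_zero] at this
      exact this
    -- from ‖x n - Tⁿ x n‖ → 0 to ‖x n - T x n‖ → 0
    have hΔ : ∀ n, 1 ≤ n → ‖x (n+1) - x n‖ ≤ 2 * ‖x n - T^[n] (x n)‖ + a n := by
      intro n hn
      have h1 : ‖T^[n] (y n) - T^[n] (x n)‖ ≤ ‖y n - x n‖ + a n :=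
        hTa (y n) (hyC n) (x n) (hxC n) n hn
      have h2 : ‖y n - x n‖ = α n * ‖x n - T^[n] (x n)‖ := by
        have hh : y n - x n = α n • (T^[n] (x n) - x n) := by rw [hy n]; module
        rw [hh, norm_smul, Real.norm_eq_abs, abs_of_nonneg (hα0 n), norm_sub_rev]
      have h3 : ‖T^[n] (x n) - x n‖ = ‖x n - T^[n] (x n)‖ := norm_sub_rev _ _
      calc ‖x (n+1) - x n‖ = ‖(T^[n] (y n) - T^[n] (x n)) + (T^[n] (x n) - x n)‖ := by
            rw [hx n]; congr 1; abel
        _ ≤ ‖T^[n] (y n) - T^[n] (x n)‖ + ‖T^[n] (x n) - x n‖ := norm_add_le _ _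
        _ ≤ (‖y n - x n‖ + a n) + ‖x n - T^[n] (x n)‖ := by rw [h3] at *; linarith
        _ ≤ 2 * ‖x n - T^[n] (x n)‖ + a n := by
            rw [h2]
            nlinarith [hα1 n, hα0 n, norm_nonneg (x n - T^[n] (x n))]
    have hτb : ∀ n, 1 ≤ n → ‖x (n+1) - T (x (n+1))‖ ≤ ‖x (n+1) - T^[n+1] (x (n+1))‖
        + L * ((L+1) * (2 * ‖x n - T^[n] (x n)‖ + a n) + ‖x n - T^[n] (x n)‖) := by
      intro n hn
      have hTn1 : ‖T^[n] (x (n+1)) - x (n+1)‖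
          ≤ (L+1) * ‖x (n+1) - x n‖ + ‖x n - T^[n] (x n)‖ := by
        have t1 : ‖T^[n] (x (n+1)) - x (n+1)‖ ≤ ‖T^[n] (x (n+1)) - T^[n] (x n)‖
            + ‖T^[n] (x n) - x n‖ + ‖x n - x (n+1)‖ := by
          have := norm_sub_le_norm_sub_add_norm_sub (T^[n] (x (n+1))) (T^[n] (x n)) (x (n+1))
          have h2 := norm_sub_le_norm_sub_add_norm_sub (T^[n] (x n)) (x n) (x (n+1))
          linarith
        have t2 : ‖T^[n] (x (n+1)) - T^[n] (x n)‖ ≤ L * ‖x (n+1) - x n‖ :=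
          hTL (x (n+1)) (hxC (n+1)) (x n) (hxC n) n hn
        have t3 : ‖x n - x (n+1)‖ = ‖x (n+1) - x n‖ := norm_sub_rev _ _
        have t4 : ‖T^[n] (x n) - x n‖ = ‖x n - T^[n] (x n)‖ := norm_sub_rev _ _
        rw [t3, t4] at t1
        linarith
      have hT1 : ‖T^[n+1] (x (n+1)) - T (x (n+1))‖ ≤ L * ‖T^[n] (x (n+1)) - x (n+1)‖ := by
        rw [Function.iterate_succ_apply']
        have := hTL (T^[n] (x (n+1))) ((hT.iterate n) (hxC (n+1))) (x (n+1)) (hxC (n+1)) 1 le_rfl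
        simpa using this
      have tri : ‖x (n+1) - T (x (n+1))‖ ≤ ‖x (n+1) - T^[n+1] (x (n+1))‖
          + ‖T^[n+1] (x (n+1)) - T (x (n+1))‖ :=
        norm_sub_le_norm_sub_add_norm_sub _ _ _
      have hΔn := hΔ n hn
      have m1 : L * ‖T^[n] (x (n+1)) - x (n+1)‖
          ≤ L * ((L+1) * ‖x (n+1) - x n‖ + ‖x n - T^[n] (x n)‖) :=
        mul_le_mul_of_nonneg_left hTn1 hL.le
      have m2 : (L+1) * ‖x (n+1) - x n‖ ≤ (L+1) * (2 * ‖x n - T^[n] (x n)‖ + a n) :=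
        mul_le_mul_of_nonneg_left hΔn (by linarith)
      have m3 : L * ((L+1) * ‖x (n+1) - x n‖ + ‖x n - T^[n] (x n)‖)
          ≤ L * ((L+1) * (2 * ‖x n - T^[n] (x n)‖ + a n) + ‖x n - T^[n] (x n)‖) :=
        mul_le_mul_of_nonneg_left (by linarith) hL.le
      linarith [tri, hT1, m1, m3]
    have hτ : Tendsto (fun n => ‖x n - T (x n)‖) atTop (nhds 0) := by
      rw [← tendsto_add_atTop_iff_nat 2]
      have hσ1 : Tendsto (fun n => ‖x (n+1) - T^[n+1] (x (n+1))‖) atTop (nhds 0) := by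
        have := hσ.comp (tendsto_add_atTop_nat 1)
        simpa [Function.comp_def] using this
      have hσ2 : Tendsto (fun n => ‖x (n+2) - T^[n+2] (x (n+2))‖) atTop (nhds 0) := by
        have := hσ.comp (tendsto_add_atTop_nat 2)
        simpa [Function.comp_def] using this
      have ha1 : Tendsto (fun n => a (n+1)) atTop (nhds 0) := by
        have := halim.comp (tendsto_add_atTop_nat 1)
        simpa [Function.comp_def] using this
      have hB : Tendsto (fun n => ‖x (n+2) - T^[n+2] (x (n+2))‖
          + L * ((L+1) * (2 * ‖x (n+1) - T^[n+1] (x (n+1))‖ + a (n+1))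
            + ‖x (n+1) - T^[n+1] (x (n+1))‖)) atTop (nhds 0) := by
        have := hσ2.add (((((hσ1.const_mul 2).add ha1).const_mul (L+1)).add hσ1).const_mul L)
        simpa using this
      refine squeeze_zero (fun n => norm_nonneg _) (fun n => ?_) hB
      have := hτb (n+1) (Nat.le_add_left 1 n)
      simpa [show n+1+1 = n+2 from rfl] using this
    -- extract a convergent subsequence
    obtain ⟨q, hqC, φ, hφ, hxq⟩ := hCcp.isSeqCompact hxC
    have hfq : T q = q := by
      have hgc : ContinuousOn (fun w => ‖w - T w‖) C := (continuousOn_id.sub hTcont).norm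
      have h1 : Tendsto (fun k => ‖x (φ k) - T (x (φ k))‖) atTop (nhds ‖q - T q‖) := by
        have hcw : ContinuousWithinAt (fun w => ‖w - T w‖) C q := hgc q hqC
        have := hcw.tendsto.comp (tendsto_nhdsWithin_of_tendsto_nhds_of_eventually_within _
          hxq (Eventually.of_forall fun k => hxC (φ k)))
        simpa [Function.comp_def] using this
      have h2 : Tendsto (fun k => ‖x (φ k) - T (x (φ k))‖) atTop (nhds 0) := by
        have := hτ.comp hφ.tendsto_atTop
        simpa [Function.comp_def] using this
      have h3 : ‖q - T q‖ = 0 := tendsto_nhds_unique h1 h2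
      exact (sub_eq_zero.1 (norm_le_zero_iff.1 h3.le)).symm
    obtain ⟨ℓ2, hℓ20, hlim2⟩ := limdist C T a ha0 hasum hTa α hα0 hα1 x y hxC hyC hy hx q hqC hfq
    have hsub : Tendsto (fun k => ‖x (φ k) - q‖) atTop (nhds 0) := by
      have := hxq
      rw [tendsto_iff_norm_sub_tendsto_zero] at this
      simpa [Function.comp_def] using this
    have hsub2 : Tendsto (fun k => ‖x (φ k) - q‖) atTop (nhds ℓ2) := by
      have := hlim2.comp hφ.tendsto_atTop
      simpa [Function.comp_def] using this
    have hℓ2 : ℓ2 = 0 := tendsto_nhds_unique hsub2 hsub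
    refine ⟨q, hqC, hfq, ?_⟩
    rw [tendsto_iff_norm_sub_tendsto_zero]
    rw [hℓ2] at hlim2
    exact hlim2
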